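/- arXiv:2412.05304 — 2 statements merged into one kernel-verified Lean document; each statement's English description precedes it below -/
import Mathlib

section
/- For any path-connected, locally path-connected pointed space (X, x₀), the fundamental group π₁(X, x₀) endowed with the whisker topology is a left-topological group: for every [η] ∈ π₁(X, x₀), the left translation λ_[η] : π₁^wh(X,x₀) → π₁^wh(X,x₀) given by λ_[η]([κ]) = [η]·[κ] is continuous (indeed a homeomorphism, since λ_[η](B([ζ],U)) = B([η·ζ],U)). -/
open Set TopologicalSpace

attribute [local instance] Path.Homotopic.setoid

universe u v

variable {X : Type u} [TopologicalSpace X]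

/-- The basic whisker-topology set `B([ζ],U)`: all classes of the form `[ζ·η]`
where `η` is a loop based at `x₀` with image in `U`. -/
def whiskerB {x₀ : X} (ζ : Path.Homotopic.Quotient x₀ x₀) (U : Set X) :
    Set (Path.Homotopic.Quotient x₀ x₀) :=
  {g | ∃ η : Path x₀ x₀, Set.range η ⊆ U ∧ g = ζ.trans ⟦η⟧}

/-- The whisker topology on `π₁(X, x₀)`, generated by the basic sets `B([ζ],U)`
for `U` an open neighborhood of `x₀`. -/
def whiskerTopology (x₀ : X) : TopologicalSpace (Path.Homotopic.Quotient x₀ x₀) :=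
  TopologicalSpace.generateFrom
    {S | ∃ (ζ : Path.Homotopic.Quotient x₀ x₀) (U : Set X),
      IsOpen U ∧ x₀ ∈ U ∧ S = whiskerB ζ U}

/-- Inversion `[ζ] ↦ [ζ⁻]` on `π₁(X, x₀)`. -/
def whiskerInv {x₀ : X} : Path.Homotopic.Quotient x₀ x₀ → Path.Homotopic.Quotient x₀ x₀ :=
  Quotient.map Path.symm (fun _ _ h => Nonempty.map Path.Homotopy.symm₂ h)

/-- `π₁^wh(X, x₀)` is a topological group: the multiplication `([ζ],[η]) ↦ [ζ·η]`
is jointly continuous and inversion `[ζ] ↦ [ζ⁻]` is continuous, with respect to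
the whisker topology. -/
def IsWhiskerTopGroup (x₀ : X) : Prop :=
  letI := whiskerTopology x₀
  Continuous (fun p : Path.Homotopic.Quotient x₀ x₀ × Path.Homotopic.Quotient x₀ x₀ =>
    p.1.trans p.2) ∧
  Continuous (whiskerInv (x₀ := x₀))


open CategoryTheory in
/-- The groupoid inverse of a loop class. -/
private noncomputable def whiskerGInv {X : Type u} [TopologicalSpace X] {x₀ : X}
    (η : Path.Homotopic.Quotient x₀ x₀) : Path.Homotopic.Quotient x₀ x₀ :=
  Groupoid.inv (show FundamentalGroupoid.mk x₀ ⟶ FundamentalGroupoid.mk x₀ from η)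

open CategoryTheory in
private lemma whisker_comp_assoc {X : Type u} [TopologicalSpace X] {x₀ : X}
    (a b c : Path.Homotopic.Quotient x₀ x₀) :
    (a.trans b).trans c = a.trans (b.trans c) :=
  Category.assoc (obj := FundamentalGroupoid X) a b c

open CategoryTheory in
private lemma whisker_inv_cancel {X : Type u} [TopologicalSpace X] {x₀ : X}
    (η κ : Path.Homotopic.Quotient x₀ x₀) :
    (whiskerGInv η).trans (η.trans κ) = κ := by
  let a : FundamentalGroupoid.mk x₀ ⟶ FundamentalGroupoid.mk x₀ := η
  let b : FundamentalGroupoid.mk x₀ ⟶ FundamentalGroupoid.mk x₀ := κ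
  have h : Groupoid.inv a ≫ a ≫ b = b := by
    rw [← Category.assoc, Groupoid.inv_comp, Category.id_comp]
  exact h

open CategoryTheory in
private lemma whisker_inv_cancel' {X : Type u} [TopologicalSpace X] {x₀ : X}
    (η κ : Path.Homotopic.Quotient x₀ x₀) :
    η.trans ((whiskerGInv η).trans κ) = κ := by
  let a : FundamentalGroupoid.mk x₀ ⟶ FundamentalGroupoid.mk x₀ := η
  let b : FundamentalGroupoid.mk x₀ ⟶ FundamentalGroupoid.mk x₀ := κ
  have h : a ≫ Groupoid.inv a ≫ b = b := by
    rw [← Category.assoc, Groupoid.comp_inv, Category.id_comp]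
  exact h

open CategoryTheory in
private lemma whisker_trans_cont {X : Type u} [TopologicalSpace X] {x₀ : X}
    (η : Path.Homotopic.Quotient x₀ x₀) :
    @Continuous _ _ (whiskerTopology x₀) (whiskerTopology x₀)
      fun κ : Path.Homotopic.Quotient x₀ x₀ => η.trans κ := by
  letI := whiskerTopology x₀
  set ηinv := whiskerGInv η with hη
  rw [whiskerTopology, continuous_generateFrom_iff]
  rintro S ⟨ζ, U, hU, hxU, rfl⟩
  have hpre : (fun κ : Path.Homotopic.Quotient x₀ x₀ => η.trans κ) ⁻¹' whiskerB ζ U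
      = whiskerB (ηinv.trans ζ) U := by
    ext κ
    constructor
    · rintro ⟨l, hl, hκ⟩
      refine ⟨l, hl, ?_⟩
      erw [whisker_comp_assoc, ← hκ, whisker_inv_cancel]
    · rintro ⟨l, hl, hκ⟩
      refine ⟨l, hl, ?_⟩
      show η.trans κ = ζ.trans ⟦l⟧
      erw [hκ, ← whisker_comp_assoc, whisker_inv_cancel']
  rw [hpre]
  exact TopologicalSpace.isOpen_generateFrom_of_mem ⟨ηinv.trans ζ, U, hU, hxU, rfl⟩

/-- For any path-connected, locally path-connected pointed space `(X, x₀)`,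
`π₁^wh(X, x₀)` is a left-topological group: every left translation
`λ_[η] : [κ] ↦ [η]·[κ]` is continuous, and indeed a homeomorphism. -/
theorem whisker_left_translation_continuous
    {X : Type u} [TopologicalSpace X] [PathConnectedSpace X] [LocallyPathConnectedSpace X]
    (x₀ : X) (η : Path.Homotopic.Quotient x₀ x₀) :
    (@Continuous _ _ (whiskerTopology x₀) (whiskerTopology x₀)
      fun κ : Path.Homotopic.Quotient x₀ x₀ => η.trans κ) ∧
    @IsHomeomorph _ _ (whiskerTopology x₀) (whiskerTopology x₀)
      (fun κ : Path.Homotopic.Quotient x₀ x₀ => η.trans κ) := by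
  letI := whiskerTopology x₀
  set ηinv := whiskerGInv η with hη
  refine ⟨whisker_trans_cont η, ?_⟩
  exact (Homeomorph.mk
    ⟨fun κ => η.trans κ, fun κ => ηinv.trans κ, whisker_inv_cancel η, whisker_inv_cancel' η⟩
    (whisker_trans_cont η) (whisker_trans_cont ηinv)).isHomeomorph
end

section
/- Let {(X_i, x_i)}_{i ∈ I} be a family of pointed topological spaces and let ∏_{i∈I} X_i carry the product topology with basepoint (x_i)_{i∈I}. Then the canonical group isomorphism Φ : π₁^wh(∏_{i∈I} X_i, (x_i)) → ∏_{i∈I} π₁^wh(X_i, x_i), defined by Φ([ζ]) = ([p_i ∘ ζ])_{i∈I} where p_i is the i-th projection, is a homeomorphism onto the product of the whisker-topologized fundamental groups (with the product topology). -/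
open Set TopologicalSpace

attribute [local instance] Path.Homotopic.setoid

universe u v

variable {X : Type u} [TopologicalSpace X]

section Aux

variable {Y : Type*} {Z : Type*} [TopologicalSpace Y] [TopologicalSpace Z]

lemma Path.Homotopic.comp_lift {a b c : Y} (P₀ : Path a b) (P₁ : Path b c) :
    (⟦P₀.trans P₁⟧ : Path.Homotopic.Quotient a c) =
      Path.Homotopic.Quotient.trans ⟦P₀⟧ ⟦P₁⟧ := rfl

lemma Path.Homotopic.map_lift {a b : Y} (P₀ : Path a b) (f : C(Y, Z)) :
    (⟦P₀.map f.continuous⟧ : Path.Homotopic.Quotient (f a) (f b)) =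
      Path.Homotopic.Quotient.map ⟦P₀⟧ f := rfl

lemma qcomp_assoc {a b c d : Y} (p : Path.Homotopic.Quotient a b)
    (q : Path.Homotopic.Quotient b c) (r : Path.Homotopic.Quotient c d) :
    (p.trans q).trans r = p.trans (q.trans r) := by
  induction p using Quotient.inductionOn
  induction q using Quotient.inductionOn
  induction r using Quotient.inductionOn
  rw [← Path.Homotopic.comp_lift, ← Path.Homotopic.comp_lift, ← Path.Homotopic.comp_lift,
    ← Path.Homotopic.comp_lift]
  exact Quotient.sound ⟨Path.Homotopy.transAssoc _ _ _⟩

lemma qcomp_refl {a b : Y} (p : Path.Homotopic.Quotient a b) :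
    p.trans ⟦Path.refl b⟧ = p := by
  induction p using Quotient.inductionOn
  rw [← Path.Homotopic.comp_lift]
  exact Quotient.sound ⟨Path.Homotopy.transRefl _⟩

lemma refl_qcomp {a b : Y} (p : Path.Homotopic.Quotient a b) :
    Path.Homotopic.Quotient.trans ⟦Path.refl a⟧ p = p := by
  induction p using Quotient.inductionOn
  rw [← Path.Homotopic.comp_lift]
  exact Quotient.sound ⟨Path.Homotopy.reflTrans _⟩

lemma qcomp_symm {a b : Y} (p : Path a b) :
    Path.Homotopic.Quotient.trans ⟦p⟧ ⟦p.symm⟧ = ⟦Path.refl a⟧ := by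
  rw [← Path.Homotopic.comp_lift]
  exact Quotient.sound ⟨(Path.Homotopy.reflTransSymm p).symm⟩

/-- Any element `g` of `π₁` can be written as `p · θ` for some loop `θ`. -/
lemma exists_qcomp {a : Y} (p g : Path.Homotopic.Quotient a a) :
    ∃ θ : Path a a, g = p.trans ⟦θ⟧ := by
  induction p using Quotient.inductionOn with
  | _ p =>
  refine ⟨(Path.Homotopic.Quotient.trans ⟦p.symm⟧ g).out, ?_⟩
  rw [show (⟦(Path.Homotopic.Quotient.trans ⟦p.symm⟧ g).out⟧ :
        Path.Homotopic.Quotient a a) = Path.Homotopic.Quotient.trans ⟦p.symm⟧ g from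
      Quotient.out_eq _]
  erw [← qcomp_assoc, qcomp_symm, refl_qcomp]

lemma mapFn_qcomp {a b c : Y} (p : Path.Homotopic.Quotient a b)
    (q : Path.Homotopic.Quotient b c) (f : C(Y, Z)) :
    (p.trans q).map f = (p.map f).trans (q.map f) := by
  induction p using Quotient.inductionOn
  induction q using Quotient.inductionOn
  rw [← Path.Homotopic.comp_lift, ← Path.Homotopic.map_lift, ← Path.Homotopic.map_lift,
    ← Path.Homotopic.map_lift, ← Path.Homotopic.comp_lift, Path.map_trans]

lemma whiskerB_isOpen {x₀ : Y} (ζ : Path.Homotopic.Quotient x₀ x₀) {U : Set Y}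
    (hU : IsOpen U) (hx : x₀ ∈ U) :
    @IsOpen _ (whiskerTopology x₀) (whiskerB ζ U) :=
  TopologicalSpace.GenerateOpen.basic _ ⟨ζ, U, hU, hx, rfl⟩

lemma mem_whiskerB_self {x₀ : Y} (ζ : Path.Homotopic.Quotient x₀ x₀) {U : Set Y}
    (hx : x₀ ∈ U) : ζ ∈ whiskerB ζ U :=
  ⟨Path.refl x₀, by rw [Path.refl_range]; exact Set.singleton_subset_iff.mpr hx,
    (qcomp_refl ζ).symm⟩

end Aux

/-- For a family of pointed spaces `(X i, x i)`, the canonical group isomorphism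
`Φ : π₁^wh(∏ᵢ Xᵢ, (xᵢ)) → ∏ᵢ π₁^wh(Xᵢ, xᵢ)`, `Φ([ζ]) = ([pᵢ ∘ ζ])ᵢ`, is a homeomorphism
onto the product of the whisker-topologized fundamental groups. -/
theorem whisker_prod_homeomorph {ι : Type u} {X : ι → Type v}
    [∀ i, TopologicalSpace (X i)] (x : ∀ i, X i) :
    let Φ : Path.Homotopic.Quotient x x → ∀ i, Path.Homotopic.Quotient (x i) (x i) :=
      fun q i => q.map ⟨fun y => y i, continuous_apply i⟩
    (∀ a b : Path.Homotopic.Quotient x x,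
        Φ (a.trans b) = fun i => (Φ a i).trans (Φ b i)) ∧
    @IsHomeomorph _ _ (whiskerTopology x)
      (@Pi.topologicalSpace ι (fun i => Path.Homotopic.Quotient (x i) (x i))
        (fun i => whiskerTopology (x i))) Φ := by
  intro Φ
  letI : TopologicalSpace (Path.Homotopic.Quotient x x) := whiskerTopology x
  letI : ∀ i, TopologicalSpace (Path.Homotopic.Quotient (x i) (x i)) :=
    fun i => whiskerTopology (x i)
  have hom : ∀ a b : Path.Homotopic.Quotient x x,
      Φ (a.trans b) = fun i => (Φ a i).trans (Φ b i) := by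
    intro a b
    funext i
    exact mapFn_qcomp a b _
  refine ⟨hom, ?_⟩
  -- continuity of Φ
  have contΦ : Continuous Φ := by
    apply continuous_pi
    intro i
    apply continuous_generateFrom_iff.mpr
    rintro S ⟨ξ, U, hU, hxU, rfl⟩
    rw [isOpen_iff_forall_mem_open]
    rintro a ha
    obtain ⟨η, hη, hη2⟩ := ha
    refine ⟨whiskerB a ((fun y => y i) ⁻¹' U), ?_, whiskerB_isOpen a (hU.preimage
      (continuous_apply i)) (Set.mem_preimage.mpr hxU), mem_whiskerB_self a hxU⟩
    rintro b ⟨σ, hσ, rfl⟩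
    show Φ (a.trans ⟦σ⟧) i ∈ whiskerB ξ U
    refine ⟨η.trans (σ.map (continuous_apply i)), ?_, ?_⟩
    · rw [Path.trans_range]
      refine Set.union_subset hη ?_
      rw [Path.map_coe, Set.range_comp]
      exact (Set.image_mono hσ).trans (Set.image_preimage_subset _ _)
    · have h3 : Φ (a.trans ⟦σ⟧) i = (Φ a i).trans (Φ ⟦σ⟧ i) := congrFun (hom a ⟦σ⟧) i
      have h4 : Φ a i = ξ.trans ⟦η⟧ := hη2
      have h5 : Φ (⟦σ⟧ : Path.Homotopic.Quotient x x) i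
          = ⟦σ.map (continuous_apply i)⟧ :=
        (Path.Homotopic.map_lift σ ⟨fun y => y i, continuous_apply i⟩).symm
      erw [h3, h4, h5, qcomp_assoc, ← Path.Homotopic.comp_lift]
  -- continuity of the inverse
  have contPi : Continuous (Path.Homotopic.pi :
      (∀ i, Path.Homotopic.Quotient (x i) (x i)) → Path.Homotopic.Quotient x x) := by
    apply continuous_generateFrom_iff.mpr
    rintro S ⟨ζ, U, hU, hxU, rfl⟩
    rw [isOpen_iff_forall_mem_open]
    intro q hq
    obtain ⟨η, hη, hη2⟩ := hq
    obtain ⟨F, u, hu, hsub⟩ := isOpen_pi_iff.mp hU x hxU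
    refine ⟨(F : Set ι).pi (fun i => whiskerB (q i) (u i)), ?_, ?_, ?_⟩
    · -- the cylinder maps into whiskerB ζ U
      intro g hg
      have hθ : ∀ i, ∃ θ : Path (x i) (x i),
          (i ∈ F → Set.range θ ⊆ u i) ∧ g i = (q i).trans ⟦θ⟧ := by
        intro i
        by_cases hi : i ∈ F
        · obtain ⟨θ, h1, h2⟩ := hg i hi
          exact ⟨θ, fun _ => h1, h2⟩
        · obtain ⟨θ, h2⟩ := exists_qcomp (q i) (g i)
          exact ⟨θ, fun h => absurd h hi, h2⟩
      choose θ h1 h2 using hθ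
      show Path.Homotopic.pi g ∈ whiskerB ζ U
      refine ⟨η.trans (Path.pi θ), ?_, ?_⟩
      · rw [Path.trans_range]
        refine Set.union_subset hη ?_
        rintro y ⟨t, rfl⟩
        refine hsub fun i hi => ?_
        rw [Path.pi_coe]
        exact h1 i hi ⟨t, rfl⟩
      · have : g = fun i => (q i).trans ⟦θ i⟧ := funext h2
        erw [this, ← Path.Homotopic.comp_pi_eq_pi_comp, Path.Homotopic.pi_lift, hη2,
          qcomp_assoc, ← Path.Homotopic.comp_lift]
    · exact isOpen_set_pi F.finite_toSet
        (fun i hi => whiskerB_isOpen (q i) (hu i hi).1 (hu i hi).2)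
    · exact fun i hi => mem_whiskerB_self (q i) (hu i hi).2
  -- bijectivity via the explicit inverse
  have hleft : Function.LeftInverse Path.Homotopic.pi Φ := fun q =>
    Path.Homotopic.pi_proj q
  have hright : Function.RightInverse Path.Homotopic.pi Φ := fun g =>
    funext fun i => Path.Homotopic.proj_pi i g
  exact (Homeomorph.mk ⟨Φ, Path.Homotopic.pi, hleft, hright⟩ contΦ contPi).isHomeomorph
end
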